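/- Let S_n be a sum of n independent uniform ±1 random variables. Then E[|S_n|] = n · 2^{1-n} · C(n-1, ⌊(n-1)/2⌋), where C denotes the binomial coefficient. -/

import Mathlib

open MeasureTheory ProbabilityTheory

private lemma tele' (n : ℕ) (hn : 0 < n) : ∀ m : ℕ,
    ∑ k ∈ Finset.range (m+1), (n.choose k : ℤ) * ((n:ℤ) - 2*k) = (n:ℤ) * ((n-1).choose m) := by
  intro m
  induction m with
  | zero => simp
  | succ m ih =>
    rw [Finset.sum_range_succ, ih]
    have h1 : n.choose (m+1) = (n-1).choose (m+1) + (n-1).choose m := by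
      obtain ⟨p, rfl⟩ : ∃ p, n = p + 1 := ⟨n - 1, by omega⟩
      simp [Nat.choose_succ_succ, Nat.add_comm]
    have h2 : (m+1) * n.choose (m+1) = n * (n-1).choose m := by
      obtain ⟨p, rfl⟩ : ∃ p, n = p + 1 := ⟨n - 1, by omega⟩
      simp only [Nat.add_sub_cancel]
      rw [Nat.mul_comm, ← Nat.add_one_mul_choose_eq]
    have h1' : (n.choose (m+1) : ℤ) = ((n-1).choose (m+1) : ℤ) + ((n-1).choose m : ℤ) := by
      exact_mod_cast h1
    have h2' : ((m:ℤ)+1) * (n.choose (m+1) : ℤ) = (n:ℤ) * ((n-1).choose m : ℤ) := by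
      exact_mod_cast h2
    push_cast
    linear_combination (n:ℤ) * h1' - 2 * h2'

private lemma key' (n : ℕ) (hn : 0 < n) :
    ∑ k ∈ Finset.range (n+1), (n.choose k : ℤ) * |(n:ℤ) - 2*k| =
      2 * n * ((n-1).choose ((n-1)/2)) := by
  have habs : ∀ x : ℤ, |x| = 2 * max x 0 - x := by
    intro x
    rcases le_or_gt 0 x with h | h
    · rw [abs_of_nonneg h, max_eq_left h]; ring
    · rw [abs_of_neg h, max_eq_right h.le]; ring
  have hsplit : ∑ k ∈ Finset.range (n+1), (n.choose k : ℤ) * |(n:ℤ) - 2*k|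
      = 2 * (∑ k ∈ Finset.range (n+1), (n.choose k : ℤ) * max ((n:ℤ) - 2*k) 0)
        - ∑ k ∈ Finset.range (n+1), (n.choose k : ℤ) * ((n:ℤ) - 2*k) := by
    have h : ∀ k ∈ Finset.range (n+1), (n.choose k : ℤ) * |(n:ℤ) - 2*k|
        = 2 * ((n.choose k : ℤ) * max ((n:ℤ) - 2*k) 0) - (n.choose k : ℤ) * ((n:ℤ) - 2*k) := by
      intro k _; rw [habs]; ring
    rw [Finset.sum_congr rfl h, Finset.sum_sub_distrib, ← Finset.mul_sum]
  have hzero : ∑ k ∈ Finset.range (n+1), (n.choose k : ℤ) * ((n:ℤ) - 2*k) = 0 := by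
    have := tele' n hn n
    rw [this, Nat.choose_eq_zero_of_lt (by omega)]
    simp
  have hmax : ∑ k ∈ Finset.range (n+1), (n.choose k : ℤ) * max ((n:ℤ) - 2*k) 0
      = ∑ k ∈ Finset.range (n/2+1), (n.choose k : ℤ) * ((n:ℤ) - 2*k) := by
    rw [← Finset.sum_subset (Finset.range_subset_range.2 (by omega : n/2+1 ≤ n+1))]
    · apply Finset.sum_congr rfl
      intro k hk
      rw [Finset.mem_range] at hk
      rw [max_eq_left (by push_cast; omega)]
    · intro k _ hk
      rw [Finset.mem_range] at hk
      rw [max_eq_right (by push_cast; omega)]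
      ring
  rw [hsplit, hzero, hmax, tele' n hn (n/2), sub_zero]
  have : (n-1).choose (n/2) = (n-1).choose ((n-1)/2) := by
    have h1 : (n-1) - n/2 = (n-1)/2 := by omega
    rw [← h1, Nat.choose_symm (by omega)]
  rw [this]; ring

private lemma step1 {Ω : Type*} [MeasureSpace Ω] [IsProbabilityMeasure (ℙ : Measure Ω)]
    (n : ℕ) (X : Fin n → Ω → ℝ)
    (hmeas : ∀ i, Measurable (X i))
    (hindep : iIndepFun X ℙ)
    (hdist : ∀ i, ℙ {ω | X i ω = 1} = 1/2 ∧ ℙ {ω | X i ω = -1} = 1/2) :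
    ∫ ω, |∑ i, X i ω| ∂ℙ
      = ((1:ℝ)/2)^n * ∑ t : Finset (Fin n), |∑ i, (if i ∈ t then (1:ℝ) else -1)| := by
  classical
  set v : Finset (Fin n) → Fin n → ℝ := fun t i => if i ∈ t then 1 else -1 with hv
  set A : Finset (Fin n) → Set Ω := fun t => ⋂ i, X i ⁻¹' {v t i} with hA
  have hAmem : ∀ t ω, ω ∈ A t ↔ ∀ i, X i ω = v t i := by
    intro t ω; simp [hA, Set.mem_iInter]
  have hAmeas : ∀ t, MeasurableSet (A t) :=
    fun t => MeasurableSet.iInter fun i => (hmeas i) (measurableSet_singleton _)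
  have hhalf : ∀ (i : Fin n) (r : ℝ), r = 1 ∨ r = -1 → ℙ (X i ⁻¹' {r}) = 1/2 := by
    intro i r hr
    rcases hr with h | h <;> subst h
    · exact (hdist i).1
    · exact (hdist i).2
  have hPA : ∀ t, ℙ (A t) = (1/2 : ENNReal)^n := by
    intro t
    have h := hindep.measure_inter_preimage_eq_mul (S := Finset.univ)
      (sets := fun i => {v t i}) (fun i _ => measurableSet_singleton _)
    have huniv : (⋂ i ∈ Finset.univ, X i ⁻¹' {v t i}) = A t := by
      simp [hA]
    rw [huniv] at h
    rw [h]
    rw [Finset.prod_congr rfl (fun i _ => hhalf i (v t i) (by by_cases h : i ∈ t <;> simp [hv, h]))]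
    simp
  have hE : ∀ᵐ ω ∂ℙ, ∀ i, X i ω = 1 ∨ X i ω = -1 := by
    rw [ae_all_iff]
    intro i
    have h1 : MeasurableSet {ω | X i ω = 1} := (hmeas i) (measurableSet_singleton 1)
    have h2 : MeasurableSet {ω | X i ω = -1} := (hmeas i) (measurableSet_singleton (-1))
    have hd : Disjoint {ω | X i ω = 1} {ω | X i ω = -1} := by
      rw [Set.disjoint_left]
      intro ω hω1 hω2
      simp only [Set.mem_setOf_eq] at hω1 hω2
      rw [hω1] at hω2; norm_num at hω2
    have hu : ℙ ({ω | X i ω = 1} ∪ {ω | X i ω = -1}) = 1 := by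
      rw [measure_union hd h2, (hdist i).1, (hdist i).2]
      exact ENNReal.add_halves 1
    have hcompl : ℙ ({ω | X i ω = 1} ∪ {ω | X i ω = -1})ᶜ = 0 := by
      rw [measure_compl (h1.union h2) (measure_ne_top _ _), hu, measure_univ, tsub_self]
    refine measure_mono_null ?_ hcompl
    intro ω hω
    simp only [Set.mem_compl_iff, Set.mem_union, Set.mem_setOf_eq] at hω ⊢
    exact hω
  set g : Ω → ℝ := fun ω =>
    ∑ t : Finset (Fin n), Set.indicator (A t) (fun _ => |∑ i, v t i|) ω with hg
  have hfg : (fun ω => |∑ i, X i ω|) =ᵐ[ℙ] g := by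
    filter_upwards [hE] with ω hω
    set t : Finset (Fin n) := Finset.univ.filter (fun i => X i ω = 1) with ht
    have hωt : ω ∈ A t := by
      rw [hAmem]
      intro i
      by_cases h : X i ω = 1
      · simp [hv, ht, h]
      · have h' := (hω i).resolve_left h
        simp [hv, ht, h, h']
    have hne : ∀ t' : Finset (Fin n), t' ≠ t → ω ∉ A t' := by
      intro t' hne' hmem
      apply hne'
      ext i
      rw [hAmem] at hmem
      have := hmem i
      simp only [ht, Finset.mem_filter, Finset.mem_univ, true_and]
      by_cases h : i ∈ t'
      · simp [hv, h] at this
        simp [h, this]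
      · simp [hv, h] at this
        constructor
        · intro hc; exact absurd hc h
        · intro hc; rw [this] at hc; norm_num at hc
    have hgω : g ω = |∑ i, v t i| := by
      show (∑ t' : Finset (Fin n), (A t').indicator (fun _ => |∑ i, v t' i|) ω) = _
      rw [Finset.sum_eq_single t]
      · rw [Set.indicator_of_mem hωt]
      · intro t' _ ht'
        rw [Set.indicator_of_notMem (hne t' ht')]
      · intro h; exact absurd (Finset.mem_univ t) h
    rw [hgω]
    congr 1
    apply Finset.sum_congr rfl
    intro i _
    exact (hAmem t ω).1 hωt i
  rw [integral_congr_ae hfg, hg]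
  rw [integral_finset_sum _ (fun t _ => (integrable_const _).indicator (hAmeas t))]
  rw [Finset.mul_sum]
  apply Finset.sum_congr rfl
  intro t _
  rw [integral_indicator_const _ (hAmeas t), measureReal_def, hPA t]
  simp only [smul_eq_mul]
  rw [ENNReal.toReal_pow]
  norm_num [mul_comm]
  simp [hv]

/-- For a sum `S_n` of `n` independent uniform `±1` random variables,
`E[|S_n|] = n · 2^(1-n) · C(n-1, ⌊(n-1)/2⌋)`. -/
theorem stmt_2 {Ω : Type*} [MeasureSpace Ω] [IsProbabilityMeasure (ℙ : Measure Ω)]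
    (n : ℕ) (hn : 0 < n) (X : Fin n → Ω → ℝ)
    (hmeas : ∀ i, Measurable (X i))
    (hindep : iIndepFun X ℙ)
    (hdist : ∀ i, ℙ {ω | X i ω = 1} = 1/2 ∧ ℙ {ω | X i ω = -1} = 1/2) :
    ∫ ω, |∑ i, X i ω| ∂ℙ
      = (n : ℝ) * (2 : ℝ) ^ (1 - (n : ℤ)) * (Nat.choose (n - 1) ((n - 1) / 2)) := by
  classical
  rw [step1 n X hmeas hindep hdist]
  have hsum : ∀ t : Finset (Fin n), ∑ i, (if i ∈ t then (1:ℝ) else -1)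
      = 2 * (t.card : ℝ) - n := by
    intro t
    have h : ∀ i : Fin n, (if i ∈ t then (1:ℝ) else -1)
        = 2 * (if i ∈ t then (1:ℝ) else 0) - 1 := by
      intro i; by_cases h : i ∈ t <;> simp [h] <;> norm_num
    rw [Finset.sum_congr rfl (fun i _ => h i), Finset.sum_sub_distrib, ← Finset.mul_sum]
    simp [Finset.sum_boole, Finset.filter_univ_mem]
  have hgroup : ∑ t : Finset (Fin n), |∑ i, (if i ∈ t then (1:ℝ) else -1)|
      = ∑ k ∈ Finset.range (n+1), (n.choose k : ℝ) * |2 * (k:ℝ) - n| := by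
    rw [Finset.sum_congr rfl (fun t _ => by rw [hsum t])]
    rw [← Finset.powerset_univ, Finset.sum_powerset]
    rw [Finset.card_univ, Fintype.card_fin]
    apply Finset.sum_congr rfl
    intro k _
    have h : ∀ t ∈ Finset.powersetCard k (Finset.univ : Finset (Fin n)),
        |2 * (t.card : ℝ) - n| = |2 * (k:ℝ) - n| := by
      intro t ht
      rw [(Finset.mem_powersetCard.1 ht).2]
    rw [Finset.sum_congr rfl h, Finset.sum_const, Finset.card_powersetCard,
      Finset.card_univ, Fintype.card_fin, nsmul_eq_mul]
  rw [hgroup]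
  have hkey := key' n hn
  have hcast : ∑ k ∈ Finset.range (n+1), (n.choose k : ℝ) * |2 * (k:ℝ) - n|
      = 2 * n * ((n-1).choose ((n-1)/2)) := by
    have := congrArg (fun z : ℤ => (z : ℝ)) hkey
    push_cast at this
    rw [← this]
    apply Finset.sum_congr rfl
    intro k _
    rw [abs_sub_comm]
  rw [hcast]
  have h2 : (2:ℝ) ^ (1 - (n:ℤ)) = 2 / 2^n := by
    rw [zpow_sub₀ (two_ne_zero), zpow_one, zpow_natCast]
  rw [h2, one_div, inv_pow]
  rw [div_eq_mul_inv]
  ring
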